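/- Let K₀ be a complete discretely valued field of characteristic 0 with perfect residue field of characteristic p, containing 𝔽_{p^n} in its residue field. Suppose K_n = K₀(x) where x^{p^n} - x = τ ∈ K₀ with v₀(τ) > -p^n v₀(p)/(p^n - 1), v₀(τ) = -u < 0, gcd(u, p) = 1. Let ω ∈ 𝒪₀ be a Teichmüller representative (ω^{p^n} = ω). Then the polynomial f(y) = (S + y)^p - (S + y) - ωτ, where S = ∑_{r=0}^{n-1} (ωx)^{p^r}, satisfies f(y) ≡ y^p - y modulo the maximal ideal of 𝒪_{K_n}, and hence has p roots in K_n. -/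

import Mathlib

open Polynomial

section aux
variable {F : Type*} [Field F] (v : F → ℤ)

theorem aux_v_one (hmul : ∀ a b : F, a ≠ 0 → b ≠ 0 → v (a * b) = v a + v b) :
    v 1 = 0 := by
  have h := hmul 1 1 one_ne_zero one_ne_zero
  rw [one_mul] at h; omega

theorem aux_v_neg (hmul : ∀ a b : F, a ≠ 0 → b ≠ 0 → v (a * b) = v a + v b)
    {a : F} (ha : a ≠ 0) : v (-a) = v a := by
  have h1 : v ((-1 : F) * (-1)) = v (-1) + v (-1) :=
    hmul _ _ (by norm_num) (by norm_num)
  rw [neg_mul_neg, one_mul, aux_v_one v hmul] at h1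
  have h2 := hmul (-1) a (by norm_num) ha
  rw [neg_one_mul] at h2
  omega

theorem aux_v_pow (hmul : ∀ a b : F, a ≠ 0 → b ≠ 0 → v (a * b) = v a + v b)
    {a : F} (ha : a ≠ 0) (k : ℕ) : v (a ^ k) = k * v a := by
  induction k with
  | zero => simpa using aux_v_one v hmul
  | succ k ih =>
    rw [pow_succ, hmul _ _ (pow_ne_zero _ ha) ha, ih]
    push_cast; ring

theorem aux_v_add_eq (hmul : ∀ a b : F, a ≠ 0 → b ≠ 0 → v (a * b) = v a + v b)
    (hadd : ∀ a b : F, a ≠ 0 → b ≠ 0 → a + b ≠ 0 → min (v a) (v b) ≤ v (a + b))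
    {a b : F} (ha : a ≠ 0) (hb : b ≠ 0) (hlt : v a < v b) :
    a + b ≠ 0 ∧ v (a + b) = v a := by
  have hab : a + b ≠ 0 := by
    intro h
    have : b = -a := by linear_combination h
    rw [this, aux_v_neg v hmul ha] at hlt
    omega
  refine ⟨hab, ?_⟩
  have h1 : min (v a) (v b) ≤ v (a + b) := hadd a b ha hb hab
  rw [min_eq_left hlt.le] at h1
  have h2 : min (v (a + b)) (v (-b)) ≤ v (a + b + -b) := by
    apply hadd _ _ hab (neg_ne_zero.mpr hb)
    intro h
    apply ha; linear_combination h
  rw [add_neg_cancel_right, aux_v_neg v hmul hb] at h2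
  omega

theorem aux_Q_mul (hmul : ∀ a b : F, a ≠ 0 → b ≠ 0 → v (a * b) = v a + v b)
    {a b : F} {c d : ℤ} (ha : a = 0 ∨ c ≤ v a) (hb : b = 0 ∨ d ≤ v b) :
    a * b = 0 ∨ c + d ≤ v (a * b) := by
  rcases ha with ha | ha
  · left; rw [ha, zero_mul]
  rcases hb with hb | hb
  · left; rw [hb, mul_zero]
  by_cases h0 : a = 0
  · left; rw [h0, zero_mul]
  by_cases h1 : b = 0
  · left; rw [h1, mul_zero]
  right; rw [hmul a b h0 h1]; omega

theorem aux_Q_pow (hmul : ∀ a b : F, a ≠ 0 → b ≠ 0 → v (a * b) = v a + v b)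
    {a : F} {c : ℤ} (ha : a = 0 ∨ c ≤ v a) (k : ℕ) :
    a ^ k = 0 ∨ (k : ℤ) * c ≤ v (a ^ k) := by
  induction k with
  | zero => right; simp [aux_v_one v hmul]
  | succ k ih =>
    have := aux_Q_mul v hmul ih ha
    rw [← pow_succ] at this
    rcases this with h | h
    · left; exact h
    · right; push_cast; linarith

theorem aux_Q_add (hadd : ∀ a b : F, a ≠ 0 → b ≠ 0 → a + b ≠ 0 → min (v a) (v b) ≤ v (a + b))
    {a b : F} {c : ℤ} (ha : a = 0 ∨ c ≤ v a) (hb : b = 0 ∨ c ≤ v b) :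
    a + b = 0 ∨ c ≤ v (a + b) := by
  rcases ha with ha | ha
  · rw [ha, zero_add]; exact hb
  rcases hb with hb | hb
  · rw [hb, add_zero]; right; exact ha
  by_cases h0 : a = 0
  · rw [h0, zero_add]; right; exact hb
  by_cases h1 : b = 0
  · rw [h1, add_zero]; right; exact ha
  by_cases h2 : a + b = 0
  · left; exact h2
  right
  exact le_trans (le_min ha hb) (hadd a b h0 h1 h2)

theorem aux_Q_sum (hadd : ∀ a b : F, a ≠ 0 → b ≠ 0 → a + b ≠ 0 → min (v a) (v b) ≤ v (a + b))
    {ι : Type*} (s : Finset ι) (g : ι → F) {c : ℤ}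
    (h : ∀ i ∈ s, g i = 0 ∨ c ≤ v (g i)) :
    (∑ i ∈ s, g i) = 0 ∨ c ≤ v (∑ i ∈ s, g i) := by
  classical
  induction s using Finset.induction_on with
  | empty => left; simp
  | @insert a s hmem ih =>
    rw [Finset.sum_insert hmem]
    exact aux_Q_add v hadd (h a (Finset.mem_insert_self a s))
      (ih fun i hi => h i (Finset.mem_insert_of_mem hi))

theorem aux_Q_nat (hmul : ∀ a b : F, a ≠ 0 → b ≠ 0 → v (a * b) = v a + v b)
    (hadd : ∀ a b : F, a ≠ 0 → b ≠ 0 → a + b ≠ 0 → min (v a) (v b) ≤ v (a + b))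
    (m : ℕ) : (m : F) = 0 ∨ 0 ≤ v (m : F) := by
  induction m with
  | zero => left; simp
  | succ m ih =>
    push_cast
    refine aux_Q_add v hadd ih ?_
    right; rw [aux_v_one v hmul]

theorem aux_Q_int (hmul : ∀ a b : F, a ≠ 0 → b ≠ 0 → v (a * b) = v a + v b)
    (hadd : ∀ a b : F, a ≠ 0 → b ≠ 0 → a + b ≠ 0 → min (v a) (v b) ≤ v (a + b))
    (m : ℤ) : (m : F) = 0 ∨ 0 ≤ v (m : F) := by
  rcases Int.natAbs_eq m with h | h
  · rw [h, Int.cast_natCast]; exact aux_Q_nat v hmul hadd _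
  · rw [h, Int.cast_neg, Int.cast_natCast]
    rcases aux_Q_nat v hmul hadd m.natAbs with h1 | h1
    · left; rw [h1, neg_zero]
    · by_cases h0 : ((m.natAbs : ℕ) : F) = 0
      · left; rw [h0, neg_zero]
      · right; rw [aux_v_neg v hmul h0]; exact h1

theorem aux_ineq (p k m n : ℕ) (hp2 : 2 ≤ p) (hk1 : 1 ≤ k) (hkp : k < p)
    (hm : 1 ≤ m) (hmn : m + 1 ≤ n) :
    (k : ℤ) * (p : ℤ) ^ (m - 1) + ((p : ℤ) - k) * (p : ℤ) ^ m ≤ (p : ℤ) ^ n - 1 := by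
  have hp1 : (1 : ℤ) ≤ p := by exact_mod_cast Nat.one_le_of_lt hp2
  have hA : (1 : ℤ) ≤ (p : ℤ) ^ (m - 1) := one_le_pow₀ hp1
  have hpm : (p : ℤ) ^ m = (p : ℤ) ^ (m - 1) * p := by
    rw [← pow_succ]; congr 1; omega
  have hpm1 : (p : ℤ) ^ (m + 1) = (p : ℤ) ^ (m - 1) * p * p := by
    rw [← pow_succ, ← pow_succ]; congr 1; omega
  have hle : (p : ℤ) ^ (m + 1) ≤ (p : ℤ) ^ n := pow_le_pow_right₀ hp1 hmn
  have hk : (1 : ℤ) ≤ k := by exact_mod_cast hk1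
  have hkp' : (k : ℤ) ≤ (p : ℤ) - 1 := by
    have : (k : ℤ) < p := by exact_mod_cast hkp
    omega
  have hp2' : (2 : ℤ) ≤ p := by exact_mod_cast hp2
  set A : ℤ := (p : ℤ) ^ (m - 1) with hAdef
  have e1 : (k : ℤ) * A + ((p : ℤ) - k) * ((p : ℤ) ^ m) = A * ((p : ℤ) * p - k * ((p : ℤ) - 1)) := by
    rw [hpm]; ring
  have e2 : A * ((p : ℤ) * p - k * ((p : ℤ) - 1)) ≤ A * ((p : ℤ) * p - ((p : ℤ) - 1)) := by
    apply mul_le_mul_of_nonneg_left _ (by linarith)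
    nlinarith
  have e3 : A * ((p : ℤ) * p - ((p : ℤ) - 1)) ≤ A * p * p - 1 := by nlinarith
  have e4 : A * p * p ≤ (p : ℤ) ^ n := by rw [← hpm1]; exact hle
  linarith

end aux

theorem add_pow_prime_eq_old {R : Type*} [CommSemiring R] {p : ℕ} (hp : p.Prime) (x y : R) :
    (x + y) ^ p = x ^ p + y ^ p +
      p * ∑ k ∈ Finset.Ioo 0 p, x ^ k * y ^ (p - k) * ((p.choose k / p : ℕ) : R) := by
  rw [add_pow_prime_eq hp]
  congr 1
  rw [Finset.mul_sum, Finset.mul_sum]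
  refine Finset.sum_congr rfl fun k hk => ?_
  obtain ⟨h1, h2⟩ := Finset.mem_Ioo.mp hk
  obtain ⟨a, rfl⟩ : ∃ a, k = a + 1 := ⟨k - 1, by omega⟩
  obtain ⟨b, hb⟩ : ∃ b, p - (a + 1) = b + 1 := ⟨p - (a + 1) - 1, by omega⟩
  rw [hb, Nat.add_sub_cancel, Nat.add_sub_cancel]
  ring

set_option maxHeartbeats 4000000 in
set_option synthInstance.maxHeartbeats 400000 in
/-- Abrashkin's elementary extensions: `K_n = K₀(x)` with `x^{p^n} - x = τ ∈ K₀`,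
`v₀(τ) = -u > -p^n v₀(p)/(p^n-1)`, `gcd(u,p) = 1`, a totally ramified elementary abelian
extension of degree `p^n` (the valuations `v₀` on `K₀` and `v` on `K_n`, normalized with
`v ∘ algebraMap = p^n · v₀`, are encoded abstractly).  For a Teichmüller representative
`ω` (`ω^{p^n} = ω`), with `S = ∑_{r=0}^{n-1} (ωx)^{p^r}`, the polynomial
`f(Y) = (S+Y)^p - (S+Y) - ωτ` is congruent to `Y^p - Y` modulo the maximal ideal of
`𝒪_{K_n}`, and hence (by Hensel's lemma in the henselian valuation ring `O`) has `p`
roots in `K_n`; in particular `z^p - z = ωτ` is solvable in `K_n`. -/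
theorem stmt14 (p n : ℕ) (hp : p.Prime) (hn : 1 ≤ n)
    (K L : Type*) [Field K] [Field L] [Algebra K L]
    (vK : K → ℤ) (v : L → ℤ)
    (hmulK : ∀ a b : K, a ≠ 0 → b ≠ 0 → vK (a * b) = vK a + vK b)
    (hmul : ∀ a b : L, a ≠ 0 → b ≠ 0 → v (a * b) = v a + v b)
    (hadd : ∀ a b : L, a ≠ 0 → b ≠ 0 → a + b ≠ 0 → min (v a) (v b) ≤ v (a + b))
    (hsurj : ∀ mz : ℤ, ∃ a : L, a ≠ 0 ∧ v a = mz)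
    (hext : ∀ a : K, a ≠ 0 → v (algebraMap K L a) = p ^ n * vK a)
    (O : ValuationSubring L) [HenselianLocalRing O]
    (hO : ∀ z : L, z ∈ O ↔ z = 0 ∨ 0 ≤ v z)
    (hres : CharP (IsLocalRing.ResidueField O) p)
    (τ : K) (x : L) (u : ℕ) (hu : 0 < u) (hcop : ¬ p ∣ u)
    (hτ0 : τ ≠ 0) (hvτ : vK τ = -(u : ℤ))
    (hx : x ^ p ^ n - x = algebraMap K L τ)
    (hKp : (p : K) ≠ 0)
    (hbound : ((p : ℤ) ^ n - 1) * u < p ^ n * vK (p : K))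
    (ω : K) (hω : ω ^ p ^ n = ω) :
    let S : L := ∑ r ∈ Finset.range n, (algebraMap K L ω * x) ^ p ^ r
    let f : Polynomial L := (C S + X) ^ p - (C S + X) - C (algebraMap K L (ω * τ))
    (∀ m : ℕ, (f - (X ^ p - X)).coeff m = 0 ∨ 0 < v ((f - (X ^ p - X)).coeff m)) ∧
    ∃ T : Finset L, T.card = p ∧ ∀ z ∈ T,
      (S + z) ^ p - (S + z) - algebraMap K L (ω * τ) = 0 := by
  intro S f
  classical
  haveI : Fact p.Prime := ⟨hp⟩
  have hp2 : 2 ≤ p := hp.two_le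
  have hp1 : (1 : ℤ) ≤ (p : ℤ) := by exact_mod_cast hp.one_lt.le
  have hu1 : (1 : ℤ) ≤ (u : ℤ) := by exact_mod_cast hu
  have hpn2 : (2 : ℤ) ≤ (p : ℤ) ^ n := by
    calc (2 : ℤ) ≤ (p : ℤ) := by exact_mod_cast hp2
    _ = (p : ℤ) ^ 1 := (pow_one _).symm
    _ ≤ (p : ℤ) ^ n := pow_le_pow_right₀ hp1 hn
  have hinj : Function.Injective (algebraMap K L) := (algebraMap K L).injective
  -- basic valuations
  have hτL0 : algebraMap K L τ ≠ 0 := fun h => hτ0 (hinj (by rw [h, map_zero]))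
  have hvτL : v (algebraMap K L τ) = -((p : ℤ) ^ n * u) := by
    rw [hext τ hτ0, hvτ]; ring
  have hx0 : x ≠ 0 := by
    intro h
    apply hτL0
    rw [← hx, h, zero_pow (pow_ne_zero n hp.ne_zero), sub_zero]
  have hvx : -(u : ℤ) ≤ v x := by
    by_contra hcon
    push_neg at hcon
    have hvxneg : v x < 0 := by omega
    have hxn0 : x ^ p ^ n ≠ 0 := pow_ne_zero _ hx0
    have hvxn : v (x ^ p ^ n) = ((p ^ n : ℕ) : ℤ) * v x := aux_v_pow v hmul hx0 _
    have hpncast : ((p ^ n : ℕ) : ℤ) = (p : ℤ) ^ n := by push_cast; ring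
    have hlt : v (x ^ p ^ n) < v (-x) := by
      rw [hvxn, aux_v_neg v hmul hx0, hpncast]
      nlinarith
    obtain ⟨hne, heq⟩ := aux_v_add_eq v hmul hadd hxn0 (neg_ne_zero.mpr hx0) hlt
    rw [← sub_eq_add_neg] at heq
    rw [hx, hvτL, hvxn, hpncast] at heq
    have : v x = -(u : ℤ) := by
      have hpn0 : (p : ℤ) ^ n ≠ 0 := by positivity
      have heq2 : (p : ℤ) ^ n * v x = (p : ℤ) ^ n * (-(u : ℤ)) := by rw [← heq]; ring
      exact mul_left_cancel₀ hpn0 heq2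
    omega
  -- valuation of ω
  have QωL : algebraMap K L ω = 0 ∨ 0 ≤ v (algebraMap K L ω) := by
    by_cases hω0 : ω = 0
    · left; rw [hω0, map_zero]
    · right
      have h1 : vK (ω ^ p ^ n) = ((p ^ n : ℕ) : ℤ) * vK ω := aux_v_pow vK hmulK hω0 _
      rw [hω] at h1
      have hpncast : ((p ^ n : ℕ) : ℤ) = (p : ℤ) ^ n := by push_cast; ring
      have hvKω : vK ω = 0 := by
        rw [hpncast] at h1; nlinarith
      rw [hext ω hω0, hvKω, mul_zero]
  -- the terms t r
  set t : ℕ → L := fun r => (algebraMap K L ω * x) ^ p ^ r with ht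
  have hS : S = ∑ r ∈ Finset.range n, t r := rfl
  have Qωx : algebraMap K L ω * x = 0 ∨ -(u : ℤ) ≤ v (algebraMap K L ω * x) := by
    have := aux_Q_mul v hmul QωL (Or.inr hvx)
    rwa [zero_add] at this
  have Qt : ∀ r : ℕ, t r = 0 ∨ -((p : ℤ) ^ r * u) ≤ v (t r) := by
    intro r
    have := aux_Q_pow v hmul Qωx (p ^ r)
    rcases this with h | h
    · left; exact h
    · right
      have hc : ((p ^ r : ℕ) : ℤ) * (-(u : ℤ)) = -((p : ℤ) ^ r * u) := by push_cast; ring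
      rwa [hc] at h
  -- partial sums
  set Sm : ℕ → L := fun m => ∑ r ∈ Finset.range m, t r with hSm
  have QSm : ∀ m : ℕ, 1 ≤ m → (Sm m = 0 ∨ -((p : ℤ) ^ (m - 1) * u) ≤ v (Sm m)) := by
    intro m hm
    apply aux_Q_sum v hadd
    intro r hr
    rcases Qt r with h | h
    · left; exact h
    · right
      have hrm : r ≤ m - 1 := by
        have := Finset.mem_range.mp hr; omega
      have hpow : (p : ℤ) ^ r ≤ (p : ℤ) ^ (m - 1) := pow_le_pow_right₀ hp1 hrm
      nlinarith
  -- valuation of p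
  have hvp : v ((p : ℕ) : L) = (p : ℤ) ^ n * vK ((p : ℕ) : K) := by
    have h1 : ((p : ℕ) : L) = algebraMap K L ((p : ℕ) : K) := by rw [map_natCast]
    rw [h1, hext _ hKp]
  have hvp1 : 1 ≤ v ((p : ℕ) : L) := by
    rw [hvp]; nlinarith
  -- the error terms in the binomial expansion
  have QD : ∀ m : ℕ, m ≤ n →
      ((Sm m) ^ p - ∑ r ∈ Finset.range m, t r ^ p = 0 ∨
        1 ≤ v ((Sm m) ^ p - ∑ r ∈ Finset.range m, t r ^ p)) := by
    intro m
    induction m with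
    | zero =>
      intro _
      left
      have h0 : Sm 0 = 0 := by rw [hSm]; simp
      rw [h0, Finset.range_zero, Finset.sum_empty, zero_pow hp.ne_zero, sub_zero]
    | succ m ih =>
      intro hmn
      have ihm := ih (by omega)
      have hstep : Sm (m + 1) = Sm m + t m := Finset.sum_range_succ t m
      have hDm1 : Sm (m + 1) ^ p - ∑ r ∈ Finset.range (m + 1), t r ^ p
          = ((Sm m) ^ p - ∑ r ∈ Finset.range m, t r ^ p)
            + ∑ k ∈ Finset.Ioo 0 p,
              (p : L) * ((Sm m) ^ k * (t m) ^ (p - k) * ((p.choose k / p : ℕ) : L)) := by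
        rw [hstep, add_pow_prime_eq_old hp (Sm m) (t m), Finset.sum_range_succ, Finset.mul_sum]
        ring
      rw [hDm1]
      apply aux_Q_add v hadd ihm
      apply aux_Q_sum v hadd
      intro k hk
      obtain ⟨hk1, hkp⟩ := Finset.mem_Ioo.mp hk
      rcases Nat.eq_zero_or_pos m with hm0 | hm1
      · left
        subst hm0
        have hSm0 : Sm 0 = 0 := by simp [hSm]
        rw [hSm0, zero_pow (by omega), zero_mul, zero_mul, mul_zero]
      · -- valuation bound
        have q1 := aux_Q_pow v hmul (QSm m hm1) k
        have q2 := aux_Q_pow v hmul (Qt m) (p - k)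
        have q3 := aux_Q_nat v hmul hadd (p.choose k / p)
        have qin := aux_Q_mul v hmul (aux_Q_mul v hmul q1 q2) q3
        have qp : ((p : ℕ) : L) = 0 ∨ (p : ℤ) ^ n * vK ((p : ℕ) : K) ≤ v (((p : ℕ)) : L) :=
          Or.inr (le_of_eq hvp.symm)
        have qall := aux_Q_mul v hmul qp qin
        rcases qall with h | h
        · left; exact h
        · right
          refine le_trans ?_ h
          have hcast1 : ((p - k : ℕ) : ℤ) = (p : ℤ) - k := by
            push_cast [hkp.le]; ring
          rw [hcast1]
          have hineq := aux_ineq p k m n hp2 hk1 hkp hm1 (by omega)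
          have hprod : ((k : ℤ) * (p : ℤ) ^ (m - 1) + ((p : ℤ) - k) * (p : ℤ) ^ m) * u
              ≤ ((p : ℤ) ^ n - 1) * u :=
            mul_le_mul_of_nonneg_right hineq (by omega)
          nlinarith
  -- telescoping: the constant term
  have htr : ∀ r : ℕ, t r ^ p = t (r + 1) := by
    intro r
    show ((algebraMap K L ω * x) ^ p ^ r) ^ p = (algebraMap K L ω * x) ^ p ^ (r + 1)
    rw [← pow_mul, ← pow_succ]
  have htel : ∑ r ∈ Finset.range n, t r ^ p - ∑ r ∈ Finset.range n, t r = t n - t 0 := by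
    have h1 : ∀ r ∈ Finset.range n, t r ^ p = t (r + 1) := fun r _ => htr r
    rw [Finset.sum_congr rfl h1, ← Finset.sum_sub_distrib, Finset.sum_range_sub t n]
  have ht0 : t 0 = algebraMap K L ω * x := by
    show (algebraMap K L ω * x) ^ p ^ 0 = _
    rw [pow_zero, pow_one]
  have htn : t n = algebraMap K L ω * x ^ p ^ n := by
    show (algebraMap K L ω * x) ^ p ^ n = _
    rw [mul_pow, ← map_pow, hω]
  have hsum_eq : ∑ r ∈ Finset.range n, t r ^ p = S + algebraMap K L (ω * τ) := by
    rw [map_mul]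
    have h2 : t n - t 0 = algebraMap K L ω * algebraMap K L τ := by
      rw [htn, ht0, ← hx]; ring
    rw [hS]
    linear_combination htel + h2
  have hD : S ^ p - S - algebraMap K L (ω * τ)
      = Sm n ^ p - ∑ r ∈ Finset.range n, t r ^ p := by
    rw [hsum_eq]
    have : Sm n = S := hS.symm
    rw [this]; ring
  have PPD : S ^ p - S - algebraMap K L (ω * τ) = 0 ∨
      1 ≤ v (S ^ p - S - algebraMap K L (ω * τ)) := by
    rw [hD]; exact QD n le_rfl
  -- middle coefficients
  set E : ℕ → L := fun k => (p : L) * S ^ k * ((p.choose k / p : ℕ) : L) with hE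
  have hE1 : ∀ k, 0 < k → k < p → (E k = 0 ∨ 1 ≤ v (E k)) := by
    intro k hk1 hkp
    have q1 := aux_Q_pow v hmul (QSm n hn) k
    have q3 := aux_Q_nat v hmul hadd (p.choose k / p)
    have qp : ((p : ℕ) : L) = 0 ∨ (p : ℤ) ^ n * vK ((p : ℕ) : K) ≤ v (((p : ℕ)) : L) :=
      Or.inr (le_of_eq hvp.symm)
    have qall := aux_Q_mul v hmul (aux_Q_mul v hmul qp q1) q3
    rcases qall with h | h
    · left; exact h
    · right
      refine le_trans ?_ h
      have hkle : (k : ℤ) ≤ (p : ℤ) - 1 := by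
        have : (k : ℤ) < p := by exact_mod_cast hkp
        omega
      have hApos : (1 : ℤ) ≤ (p : ℤ) ^ (n - 1) := one_le_pow₀ hp1
      have hpn : (p : ℤ) ^ n = (p : ℤ) ^ (n - 1) * p := by
        rw [← pow_succ]; congr 1; omega
      have hineq : (k : ℤ) * (p : ℤ) ^ (n - 1) ≤ (p : ℤ) ^ n - 1 := by
        calc (k : ℤ) * (p : ℤ) ^ (n - 1) ≤ ((p : ℤ) - 1) * (p : ℤ) ^ (n - 1) :=
              mul_le_mul_of_nonneg_right hkle (by linarith)
          _ = (p : ℤ) ^ n - (p : ℤ) ^ (n - 1) := by rw [hpn]; ring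
          _ ≤ (p : ℤ) ^ n - 1 := by linarith
      have hprod : ((k : ℤ) * (p : ℤ) ^ (n - 1)) * u ≤ ((p : ℤ) ^ n - 1) * u :=
        mul_le_mul_of_nonneg_right hineq (by omega)
      have hrw : (p : ℤ) ^ n * vK ((p : ℕ) : K) + (k : ℤ) * -((p : ℤ) ^ (n - 1) * u) + 0
          = (p : ℤ) ^ n * vK ((p : ℕ) : K) - ((k : ℤ) * (p : ℤ) ^ (n - 1)) * u := by ring
      linarith [hprod, hbound, hrw]
  -- the polynomial identity
  have hgpoly : f - (X ^ p - X)
      = C (S ^ p - S - algebraMap K L (ω * τ))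
        + ∑ k ∈ Finset.Ioo 0 p, C (E k) * X ^ (p - k) := by
    have hf : f = (C S + X) ^ p - (C S + X) - C (algebraMap K L (ω * τ)) := rfl
    rw [hf, add_pow_prime_eq_old hp (C S) X]
    have hsum : ∑ k ∈ Finset.Ioo 0 p, C (E k) * X ^ (p - k)
        = (p : L[X]) * ∑ k ∈ Finset.Ioo 0 p, C S ^ k * X ^ (p - k) * ((p.choose k / p : ℕ) : L[X]) := by
      rw [Finset.mul_sum]
      refine Finset.sum_congr rfl fun k _ => ?_
      rw [hE]
      simp only [C_mul, C_pow, map_natCast]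
      push_cast
      ring
    rw [hsum]
    simp only [map_sub, map_pow]
    push_cast
    ring
  -- Part 1
  constructor
  · intro m
    rw [hgpoly, coeff_add, coeff_C, finset_sum_coeff]
    have hc1 : (if m = 0 then S ^ p - S - algebraMap K L (ω * τ) else 0) = 0 ∨
        1 ≤ v (if m = 0 then S ^ p - S - algebraMap K L (ω * τ) else 0) := by
      split
      · exact PPD
      · left; rfl
    have hc2 : ∑ k ∈ Finset.Ioo 0 p, (C (E k) * X ^ (p - k)).coeff m = 0 ∨
        1 ≤ v (∑ k ∈ Finset.Ioo 0 p, (C (E k) * X ^ (p - k)).coeff m) := by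
      apply aux_Q_sum v hadd
      intro k hk
      obtain ⟨hk1, hkp⟩ := Finset.mem_Ioo.mp hk
      rw [coeff_C_mul, coeff_X_pow]
      split
      · rw [mul_one]; exact hE1 k hk1 hkp
      · left; rw [mul_zero]
    rcases aux_Q_add v hadd hc1 hc2 with h | h
    · left; exact h
    · right; omega

  -- Part 2
  · haveI := hres
    have hmemmax : ∀ z : O, ((z : L) = 0 ∨ 1 ≤ v (z : L)) → z ∈ IsLocalRing.maximalIdeal O := by
      intro z hz
      rw [IsLocalRing.mem_maximalIdeal, mem_nonunits_iff]
      intro hunit'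
      obtain ⟨w, hw⟩ := isUnit_iff_exists_inv.mp hunit'
      have hw' : (z : L) * (w : L) = 1 := by exact_mod_cast congrArg Subtype.val hw
      rcases hz with h | h
      · rw [h, zero_mul] at hw'; exact zero_ne_one hw'
      · have hz0 : (z : L) ≠ 0 := by intro h0; rw [h0, zero_mul] at hw'; exact zero_ne_one hw'
        have hw0 : (w : L) ≠ 0 := by intro h0; rw [h0, mul_zero] at hw'; exact zero_ne_one hw'
        have hmul1 := hmul _ _ hz0 hw0
        rw [hw', aux_v_one v hmul] at hmul1
        have hvw : 0 ≤ v (w : L) := by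
          rcases (hO (w : L)).mp w.2 with h1 | h1
          · exact absurd h1 hw0
          · exact h1
        omega
    have hunitO : ∀ z : O, (z : L) ≠ 0 → v (z : L) = 0 → IsUnit z := by
      intro z h0 hv0
      rw [isUnit_iff_exists_inv]
      have hvi : v (z : L)⁻¹ = 0 := by
        have h1 := hmul (z : L) (z : L)⁻¹ h0 (inv_ne_zero h0)
        rw [mul_inv_cancel₀ h0, aux_v_one v hmul] at h1
        omega
      refine ⟨⟨(z : L)⁻¹, (hO _).mpr (Or.inr (le_of_eq hvi.symm))⟩, Subtype.ext ?_⟩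
      push_cast
      exact mul_inv_cancel₀ h0
    have hDO : S ^ p - S - algebraMap K L (ω * τ) ∈ O := by
      apply (hO _).mpr
      rcases PPD with h | h
      · exact Or.inl h
      · exact Or.inr (by omega)
    have hEO : ∀ k : {y // y ∈ Finset.Ioo 0 p}, E k.1 ∈ O := by
      intro k
      apply (hO _).mpr
      obtain ⟨hk1, hkp⟩ := Finset.mem_Ioo.mp k.2
      rcases hE1 k.1 hk1 hkp with h | h
      · exact Or.inl h
      · exact Or.inr (by omega)
    obtain ⟨dD, hdD⟩ : ∃ d : O, (d : L) = S ^ p - S - algebraMap K L (ω * τ) :=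
      ⟨⟨_, hDO⟩, rfl⟩
    obtain ⟨bE, hbE⟩ : ∃ b : {y // y ∈ Finset.Ioo 0 p} → O, ∀ k, ((b k : O) : L) = E k.1 :=
      ⟨fun k => ⟨E k.1, hEO k⟩, fun k => rfl⟩
    set FO : Polynomial O := X ^ p - X + C dD
        + ∑ k ∈ (Finset.Ioo 0 p).attach, C (bE k) * X ^ (p - k.1) with hFO
    have hevalFO : ∀ z : O, ((FO.eval z : O) : L)
        = (z : L) ^ p - (z : L) + (S ^ p - S - algebraMap K L (ω * τ))
          + ∑ k ∈ (Finset.Ioo 0 p).attach, E k.1 * (z : L) ^ (p - k.1) := by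
      intro z
      rw [hFO]
      simp only [eval_add, eval_sub, eval_pow, eval_X, eval_C, eval_finset_sum, eval_mul]
      push_cast [hdD, hbE]
      ring
    have hkey : ∀ ζ : L, (S + ζ) ^ p - (S + ζ) - algebraMap K L (ω * τ)
        = ζ ^ p - ζ + (S ^ p - S - algebraMap K L (ω * τ))
          + ∑ k ∈ Finset.Ioo 0 p, E k * ζ ^ (p - k) := by
      intro ζ
      rw [add_pow_prime_eq_old hp S ζ]
      have hs : ∑ k ∈ Finset.Ioo 0 p, E k * ζ ^ (p - k)
          = (p : L) * ∑ k ∈ Finset.Ioo 0 p, S ^ k * ζ ^ (p - k) * ((p.choose k / p : ℕ) : L) := by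
        rw [Finset.mul_sum]
        refine Finset.sum_congr rfl fun k _ => ?_
        rw [hE]
        ring
      rw [hs]
      ring
    -- FO is monic
    have hbotp : (⊥ : WithBot ℕ) < (p : ℕ) := by
      exact lt_of_lt_of_le (WithBot.bot_lt_coe 0) (by exact_mod_cast Nat.zero_le p)
    have hmonic : FO.Monic := by
      have heq : FO = X ^ p + (-X + C dD
          + ∑ k ∈ (Finset.Ioo 0 p).attach, C (bE k) * X ^ (p - k.1)) := by
        rw [hFO]; ring
      rw [heq]
      apply monic_X_pow_add
      refine lt_of_le_of_lt (degree_add_le _ _) (max_lt (lt_of_le_of_lt (degree_add_le _ _) (max_lt ?_ ?_)) ?_)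
      · rw [degree_neg, degree_X]
        exact_mod_cast hp.one_lt
      · refine lt_of_le_of_lt degree_C_le ?_
        exact_mod_cast hp.pos
      · refine lt_of_le_of_lt (degree_sum_le _ _) ?_
        rw [Finset.sup_lt_iff hbotp]
        intro k hk
        refine lt_of_le_of_lt (degree_C_mul_X_pow_le _ _) ?_
        have hlt : p - k.1 < p := by
          obtain ⟨hk1, hkp⟩ := Finset.mem_Ioo.mp k.2
          omega
        exact_mod_cast hlt
    -- Fermat
    have hfermat : ∀ a : ℕ, ∃ j : ℤ, ((a : ℤ) ^ p - a) = p * j := by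
      intro a
      have h1 : (((a : ℤ) ^ p - a : ℤ) : ZMod p) = 0 := by
        push_cast
        rw [ZMod.pow_card]
        ring
      obtain ⟨j, hj⟩ := (ZMod.intCast_zmod_eq_zero_iff_dvd _ p).mp h1
      exact ⟨j, hj⟩
    -- evaluation at each Teichmueller-like point lies in the maximal ideal
    have heval : ∀ i : Fin p, FO.eval ((i : ℕ) : O) ∈ IsLocalRing.maximalIdeal O := by
      intro i
      apply hmemmax
      have hc := hevalFO ((i : ℕ) : O)
      have hcoe : ((((i : ℕ) : O)) : L) = ((i : ℕ) : L) := by push_cast; rfl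
      rw [hcoe] at hc
      rw [hc]
      obtain ⟨j, hj⟩ := hfermat (i : ℕ)
      have h1 : ((i : ℕ) : L) ^ p - ((i : ℕ) : L) = ((p : ℕ) : L) * ((j : ℤ) : L) := by
        have h2 : ((((i : ℕ) : ℤ) ^ p - (i : ℕ) : ℤ) : L) = (((p : ℤ) * j : ℤ) : L) := by
          rw [hj]
        push_cast at h2
        linear_combination h2
      have q1 : ((i : ℕ) : L) ^ p - ((i : ℕ) : L) = 0 ∨
          1 ≤ v (((i : ℕ) : L) ^ p - ((i : ℕ) : L)) := by
        rw [h1]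
        rcases aux_Q_mul v hmul (Or.inr hvp1) (aux_Q_int v hmul hadd j) with h | h
        · exact Or.inl h
        · exact Or.inr (by omega)
      have q3 : (∑ k ∈ (Finset.Ioo 0 p).attach, E k.1 * ((i : ℕ) : L) ^ (p - k.1)) = 0 ∨
          1 ≤ v (∑ k ∈ (Finset.Ioo 0 p).attach, E k.1 * ((i : ℕ) : L) ^ (p - k.1)) := by
        apply aux_Q_sum v hadd
        intro k _
        obtain ⟨hk1, hkp⟩ := Finset.mem_Ioo.mp k.2
        have qpow := aux_Q_pow v hmul (aux_Q_nat v hmul hadd i) (p - k.1)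
        rcases aux_Q_mul v hmul (hE1 k.1 hk1 hkp) qpow with h | h
        · exact Or.inl h
        · right
          refine le_trans (by omega) h
      rcases aux_Q_add v hadd (aux_Q_add v hadd q1 PPD) q3 with h | h
      · exact Or.inl h
      · exact Or.inr (by omega)
    -- the derivative is a unit at these points
    have hderivFO : ∀ z : O, ((FO.derivative.eval z : O) : L)
        = -1 + ((p : L) * (z : L) ^ (p - 1)
          + ∑ k ∈ (Finset.Ioo 0 p).attach,
              E k.1 * (((p - k.1 : ℕ)) : L) * (z : L) ^ (p - k.1 - 1)) := by
      intro z
      rw [hFO]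
      simp only [derivative_add, derivative_sub, derivative_X_pow, derivative_X,
        derivative_C, derivative_sum, derivative_C_mul_X_pow]
      simp only [eval_add, eval_sub, eval_mul, eval_pow, eval_X, eval_C, eval_finset_sum,
        eval_one, add_zero, sub_zero]
      push_cast [hbE]
      ring
    have hderivunit : ∀ i : Fin p, IsUnit (FO.derivative.eval ((i : ℕ) : O)) := by
      intro i
      have hc := hderivFO ((i : ℕ) : O)
      have hcoe : ((((i : ℕ) : O)) : L) = ((i : ℕ) : L) := by push_cast; rfl
      rw [hcoe] at hc
      set M : L := (p : L) * ((i : ℕ) : L) ^ (p - 1)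
          + ∑ k ∈ (Finset.Ioo 0 p).attach,
              E k.1 * (((p - k.1 : ℕ)) : L) * ((i : ℕ) : L) ^ (p - k.1 - 1) with hM
      have qM : M = 0 ∨ 1 ≤ v M := by
        rw [hM]
        have q1 : (p : L) * ((i : ℕ) : L) ^ (p - 1) = 0 ∨
            1 ≤ v ((p : L) * ((i : ℕ) : L) ^ (p - 1)) := by
          have qpow := aux_Q_pow v hmul (aux_Q_nat v hmul hadd i) (p - 1)
          have hq : ((p : ℕ) : L) = (p : L) := by push_cast; rfl
          rcases aux_Q_mul v hmul (hq ▸ Or.inr hvp1) qpow with h | h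
          · exact Or.inl h
          · exact Or.inr (by omega)
        have q2 : (∑ k ∈ (Finset.Ioo 0 p).attach,
            E k.1 * (((p - k.1 : ℕ)) : L) * ((i : ℕ) : L) ^ (p - k.1 - 1)) = 0 ∨
            1 ≤ v (∑ k ∈ (Finset.Ioo 0 p).attach,
              E k.1 * (((p - k.1 : ℕ)) : L) * ((i : ℕ) : L) ^ (p - k.1 - 1)) := by
          apply aux_Q_sum v hadd
          intro k _
          obtain ⟨hk1, hkp⟩ := Finset.mem_Ioo.mp k.2
          have qpow := aux_Q_pow v hmul (aux_Q_nat v hmul hadd i) (p - k.1 - 1)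
          have qnat := aux_Q_nat v hmul hadd (p - k.1)
          rcases aux_Q_mul v hmul (aux_Q_mul v hmul (hE1 k.1 hk1 hkp) qnat) qpow with h | h
          · exact Or.inl h
          · right
            refine le_trans (by omega) h
        rcases aux_Q_add v hadd q1 q2 with h | h
        · exact Or.inl h
        · exact Or.inr (by omega)
      by_cases hM0 : M = 0
      · apply hunitO
        · rw [hc, hM0, add_zero]; norm_num
        · rw [hc, hM0, add_zero]
          rw [show (-1 : L) = -(1 : L) by ring, aux_v_neg v hmul one_ne_zero, aux_v_one v hmul]
      · have hvM : 1 ≤ v M := qM.resolve_left hM0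
        have hne1 : (-1 : L) ≠ 0 := by norm_num
        have hv1 : v (-1 : L) = 0 := by
          rw [show (-1 : L) = -(1 : L) by ring, aux_v_neg v hmul one_ne_zero, aux_v_one v hmul]
        have hlt : v (-1 : L) < v M := by omega
        obtain ⟨hne, heqv⟩ := aux_v_add_eq v hmul hadd hne1 hM0 hlt
        apply hunitO
        · rw [hc]; exact hne
        · rw [hc, heqv, hv1]
    -- Hensel roots
    have hroot : ∀ i : Fin p, ∃ z : O, FO.IsRoot z ∧
        z - ((i : ℕ) : O) ∈ IsLocalRing.maximalIdeal O :=
      fun i => HenselianLocalRing.is_henselian FO hmonic _ (heval i) (hderivunit i)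
    choose rt hrt1 hrt2 using hroot
    have hinjrt : Function.Injective (fun i : Fin p => ((rt i : O) : L)) := by
      intro i j hij
      have hij' : rt i = rt j := Subtype.coe_injective hij
      have hmem : ((i : ℕ) : O) - ((j : ℕ) : O) ∈ IsLocalRing.maximalIdeal O := by
        have e : ((i : ℕ) : O) - ((j : ℕ) : O)
            = (rt j - ((j : ℕ) : O)) - (rt i - ((i : ℕ) : O)) := by
          rw [← hij']; ring
        rw [e]
        exact Ideal.sub_mem _ (hrt2 j) (hrt2 i)
      have h0' : (((i : ℕ) : IsLocalRing.ResidueField O))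
          - (((j : ℕ) : IsLocalRing.ResidueField O)) = 0 := by
        have h1 := Ideal.Quotient.eq_zero_iff_mem.mpr hmem
        rwa [map_sub, map_natCast, map_natCast] at h1
      have hres0 : ((((i : ℕ) : ℤ) - ((j : ℕ) : ℤ) : ℤ) : IsLocalRing.ResidueField O) = 0 := by
        push_cast
        exact h0'
      have hdvd : (p : ℤ) ∣ ((i : ℕ) : ℤ) - ((j : ℕ) : ℤ) :=
        (CharP.intCast_eq_zero_iff _ p _).mp hres0
      have habs : |((i : ℕ) : ℤ) - ((j : ℕ) : ℤ)| < (p : ℤ) := by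
        have hi := i.2
        have hj := j.2
        rw [abs_lt]
        omega
      have hz := Int.eq_zero_of_abs_lt_dvd hdvd habs
      have : (i : ℕ) = (j : ℕ) := by omega
      exact Fin.ext this
    refine ⟨Finset.image (fun i : Fin p => ((rt i : O) : L)) Finset.univ, ?_, ?_⟩
    · rw [Finset.card_image_of_injective _ hinjrt, Finset.card_univ, Fintype.card_fin]
    · intro z hz
      obtain ⟨i, _, hi⟩ := Finset.mem_image.mp hz
      rw [← hi]
      have h0 : FO.eval (rt i) = 0 := hrt1 i
      have hc := hevalFO (rt i)
      rw [h0] at hc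
      rw [hkey ((rt i : O) : L)]
      rw [← Finset.sum_attach (Finset.Ioo 0 p) (fun k => E k * ((rt i : O) : L) ^ (p - k))]
      have hc0 : ((0 : O) : L) = 0 := by push_cast; rfl
      rw [hc0] at hc
      linear_combination -hc
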